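/- Let X be a rearrangement invariant function space on (0,∞) with the Fatou property such that L∞ ↪ X, the Cesàro operator C is bounded on X, and fχ_A ∈ X_a whenever f ∈ X and A has finite measure. Then the Cesàro space CX = { f : C(|f|) ∈ X } with norm ‖f‖_{CX} = ‖C(|f|)‖_X contains a lattice isometric copy of ℓ∞. -/

import Mathlib

open Filter Topology MeasureTheory Set

/-- A **Banach ideal space** on a measure space `(α, μ)`: a collection of (real-valued)
measurable functions with a complete lattice-compatible norm satisfying the ideal property. -/
structure BanachIdealSpace (α : Type*) [MeasurableSpace α] (μ : Measure α) where
  Mem : (α → ℝ) → Prop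
  N : (α → ℝ) → ℝ
  mem_zero : Mem 0
  mem_add : ∀ f g, Mem f → Mem g → Mem (f + g)
  mem_smul : ∀ (c : ℝ) f, Mem f → Mem (c • f)
  measurable : ∀ f, Mem f → AEMeasurable f μ
  N_nonneg : ∀ f, 0 ≤ N f
  N_zero : N 0 = 0
  N_eq_zero : ∀ f, Mem f → N f = 0 → (∀ᵐ x ∂μ, f x = 0)
  N_add : ∀ f g, Mem f → Mem g → N (f + g) ≤ N f + N g
  N_smul : ∀ (c : ℝ) f, N (c • f) = |c| * N f
  ideal : ∀ f g, AEMeasurable f μ → (∀ᵐ x ∂μ, |f x| ≤ |g x|) → Mem g →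
    Mem f ∧ N f ≤ N g
  complete : ∀ u : ℕ → (α → ℝ), (∀ n, Mem (u n)) →
    (∀ ε : ℝ, 0 < ε → ∃ n₀ : ℕ, ∀ m n, n₀ ≤ m → n₀ ≤ n → N (u m - u n) < ε) →
    ∃ f, Mem f ∧ Tendsto (fun n => N (u n - f)) atTop (𝓝 0)

namespace BanachIdealSpace

variable {α : Type*} [MeasurableSpace α] {μ : Measure α}

/-- Distance (w.r.t. a norm functional `N`) from `f` to a set `S` of functions. -/
noncomputable def distIn (N : (α → ℝ) → ℝ) (f : α → ℝ) (S : Set (α → ℝ)) : ℝ :=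
  sInf ((fun g => N (f - g)) '' S)

/-- The set of **order continuous elements** of a (generalized) function space given by a
membership predicate `Mem` and a norm `N`: those `f` such that every sequence `uₙ` with
`0 ≤ uₙ ≤ |f|` a.e., a.e. non-increasing and converging to `0` a.e., satisfies `N (uₙ) → 0`. -/
def ocSet (μ : Measure α) (Mem : (α → ℝ) → Prop) (N : (α → ℝ) → ℝ) : Set (α → ℝ) :=
  {f | Mem f ∧ ∀ u : ℕ → (α → ℝ), (∀ n, Mem (u n)) →
    (∀ n, ∀ᵐ x ∂μ, 0 ≤ u n x ∧ u n x ≤ |f x|) →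
    (∀ n, ∀ᵐ x ∂μ, u (n + 1) x ≤ u n x) →
    (∀ᵐ x ∂μ, Tendsto (fun n => u n x) atTop (𝓝 0)) →
    Tendsto (fun n => N (u n)) atTop (𝓝 0)}

/-- The ideal `X_a` of order continuous elements of a Banach ideal space `X`. -/
def oc (X : BanachIdealSpace α μ) : Set (α → ℝ) := ocSet μ X.Mem X.N

/-- An **order ideal** of a Banach ideal space: a closed solid linear subspace. -/
structure IsOrderIdeal (X : BanachIdealSpace α μ) (J : Set (α → ℝ)) : Prop where
  subset : ∀ f ∈ J, X.Mem f
  zero : (0 : α → ℝ) ∈ J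
  add : ∀ f g, f ∈ J → g ∈ J → f + g ∈ J
  smul : ∀ (c : ℝ) f, f ∈ J → c • f ∈ J
  solid : ∀ f g, f ∈ J → X.Mem g → (∀ᵐ x ∂μ, |g x| ≤ |f x|) → g ∈ J
  closed : ∀ (u : ℕ → (α → ℝ)) f, (∀ n, u n ∈ J) → X.Mem f →
    Tendsto (fun n => X.N (f - u n)) atTop (𝓝 0) → f ∈ J

/-- The **Fatou property** of a Banach ideal space. -/
def Fatou (X : BanachIdealSpace α μ) : Prop :=
  ∀ (u : ℕ → (α → ℝ)) (f : α → ℝ), (∀ n, X.Mem (u n)) → AEMeasurable f μ →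
    (∀ᵐ x ∂μ, 0 ≤ u 0 x) → (∀ᵐ x ∂μ, Monotone fun n => u n x) →
    (∀ᵐ x ∂μ, Tendsto (fun n => u n x) atTop (𝓝 (f x))) →
    BddAbove (Set.range fun n => X.N (u n)) →
    X.Mem f ∧ Tendsto (fun n => X.N (u n)) atTop (𝓝 (X.N f))

/-- The **semi-Fatou property**: if `0 ≤ uₙ ↑ f ∈ X` then `‖uₙ‖ ↑ ‖f‖`. -/
def SemiFatou (X : BanachIdealSpace α μ) : Prop :=
  ∀ (u : ℕ → (α → ℝ)) (f : α → ℝ), (∀ n, X.Mem (u n)) → X.Mem f →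
    (∀ᵐ x ∂μ, 0 ≤ u 0 x) → (∀ᵐ x ∂μ, Monotone fun n => u n x) →
    (∀ᵐ x ∂μ, Tendsto (fun n => u n x) atTop (𝓝 (f x))) →
    Tendsto (fun n => X.N (u n)) atTop (𝓝 (X.N f))

/-- A Banach ideal space is **rearrangement invariant (symmetric)**: equimeasurable
functions belong to the space simultaneously and have equal norms. -/
def Symmetric (X : BanachIdealSpace α μ) : Prop :=
  ∀ f g, AEMeasurable f μ →
    (∀ lam : ℝ, 0 < lam → μ {x | lam < |f x|} = μ {x | lam < |g x|}) →
    X.Mem g → X.Mem f ∧ X.N f = X.N g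

/-- The **non-increasing rearrangement** of a function `f` (w.r.t. the measure `μ`). -/
noncomputable def rear (μ : Measure α) (f : α → ℝ) (t : ℝ) : ℝ :=
  sInf {lam : ℝ | 0 < lam ∧ μ {x | lam < |f x|} ≤ ENNReal.ofReal t}

/-- A (generalized) function space given by `(Mem, N)` contains a **lattice isometric copy
of `ℓ∞`**: there is a linear map from bounded sequences which preserves absolute values
(hence the lattice operations) and is an isometry for the sup norm on bounded sequences. -/
def HasLatticeCopyLinf (Mem : (α → ℝ) → Prop) (N : (α → ℝ) → ℝ) : Prop :=
  ∃ T : (ℕ → ℝ) → (α → ℝ),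
    (∀ x y, T (x + y) = T x + T y) ∧
    (∀ (c : ℝ) x, T (c • x) = c • T x) ∧
    (∀ x, T (fun n => |x n|) = fun t => |T x t|) ∧
    (∀ x : ℕ → ℝ, BddAbove (Set.range fun n => |x n|) →
      Mem (T x) ∧ N (T x) = ⨆ n, |x n|)

end BanachIdealSpace

open BanachIdealSpace

/-- The continuous Cesàro (Hardy) operator `C(f)(x) = (1/x) ∫₀ˣ |f(t)| dt`. -/
noncomputable def cesaro (f : ℝ → ℝ) (x : ℝ) : ℝ :=
  (1 / x) * ∫ t in Set.Ioo (0 : ℝ) x, |f t|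


namespace CesaroProof

open Nat MeasureTheory Set Filter

lemma exists_fact (t : ℝ) : ∃ k : ℕ, t ≤ ((k+1).factorial : ℝ) := by
  obtain ⟨n, hn⟩ := exists_nat_ge t
  refine ⟨n, hn.trans ?_⟩
  exact_mod_cast Nat.le_of_lt_succ (Nat.lt_succ_of_le ((Nat.le_succ n).trans (n+1).self_le_factorial))

/-- The index of the factorial block containing `t`. -/
noncomputable def blk (t : ℝ) : ℕ := Nat.find (exists_fact t)

lemma le_fact_blk (t : ℝ) : t ≤ (((blk t)+1).factorial : ℝ) := Nat.find_spec (exists_fact t)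

lemma blk_eq {k : ℕ} {t : ℝ} (h1 : (k.factorial : ℝ) < t) (h2 : t ≤ ((k+1).factorial : ℝ)) :
    blk t = k := by
  refine le_antisymm (Nat.find_le h2) ?_
  by_contra h
  push_neg at h
  have hle : (blk t + 1).factorial ≤ k.factorial := Nat.factorial_le (by omega)
  have : t ≤ (k.factorial : ℝ) := (le_fact_blk t).trans (by exact_mod_cast hle)
  linarith

lemma blk_mono : Monotone blk := fun s t h => Nat.find_le (h.trans (le_fact_blk t))

/-- Index with infinite fibers. -/
def nu (k : ℕ) : ℕ := (Nat.unpair k).1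

/-- The raw embedding of sequences into functions. -/
noncomputable def rawT (x : ℕ → ℝ) (t : ℝ) : ℝ := if 1 < t then x (nu (blk t)) else 0

lemma measurable_rawT (x : ℕ → ℝ) : Measurable (rawT x) := by
  have hblk : Measurable blk := blk_mono.measurable
  have h1 : Measurable fun t => x (nu (blk t)) :=
    (measurable_from_top (f := fun k : ℕ => x (nu k))).comp hblk
  exact Measurable.ite (measurableSet_Ioi : MeasurableSet (Set.Ioi (1:ℝ))) h1 measurable_const

lemma rawT_add (x y : ℕ → ℝ) : rawT (x + y) = rawT x + rawT y := by
  funext t; simp only [rawT, Pi.add_apply]; split_ifs <;> simp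

lemma rawT_smul (c : ℝ) (x : ℕ → ℝ) : rawT (c • x) = c • rawT x := by
  funext t; simp only [rawT, Pi.smul_apply, smul_eq_mul]; split_ifs <;> simp

lemma rawT_abs (x : ℕ → ℝ) : rawT (fun n => |x n|) = fun t => |rawT x t| := by
  funext t; simp only [rawT]; split_ifs <;> simp

/-- The characteristic function of the set `Aₙ`. -/
noncomputable def chi (n : ℕ) : ℝ → ℝ := rawT (fun m => if m = n then 1 else 0)

lemma measurable_chi (n : ℕ) : Measurable (chi n) := measurable_rawT _

lemma chi_abs_le_one (n : ℕ) (t : ℝ) : |chi n t| ≤ 1 := by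
  simp only [chi, rawT]; split_ifs <;> norm_num

lemma chi_eq_one {n k : ℕ} (hk : nu k = n) {t : ℝ}
    (h1 : (k.factorial : ℝ) < t) (h2 : t ≤ ((k+1).factorial : ℝ)) : chi n t = 1 := by
  have hf1 : (1:ℝ) ≤ (k.factorial : ℝ) := by exact_mod_cast k.factorial_pos
  have h1' : (1:ℝ) < t := lt_of_le_of_lt hf1 h1
  simp only [chi, rawT, if_pos h1', blk_eq h1 h2, hk, if_true]

section cesaroLemmas

lemma cesaro_nonpos {f : ℝ → ℝ} {t : ℝ} (ht : t ≤ 0) : cesaro f t = 0 := by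
  unfold cesaro
  rw [Set.Ioo_eq_empty (not_lt.mpr ht)]
  simp

lemma integrableOnAbs {f : ℝ → ℝ} (hf : Measurable f) {M : ℝ} (hM : ∀ u, |f u| ≤ M) (t : ℝ) :
    IntegrableOn (fun u => |f u|) (Set.Ioo 0 t) volume := by
  refine Integrable.mono' (g := fun _ => M)
    (integrableOn_const measure_Ioo_lt_top.ne) hf.abs.aestronglyMeasurable ?_
  filter_upwards with u
  simpa [Real.norm_eq_abs, abs_abs] using hM u

lemma cesaro_nonneg (f : ℝ → ℝ) (t : ℝ) : 0 ≤ cesaro f t := by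
  rcases le_or_gt t 0 with h | h
  · rw [cesaro_nonpos h]
  · exact mul_nonneg (by positivity) (integral_nonneg fun u => abs_nonneg _)

lemma cesaro_le {f : ℝ → ℝ} (hf : Measurable f) {M : ℝ} (hM0 : 0 ≤ M)
    (hM : ∀ u, |f u| ≤ M) (t : ℝ) : cesaro f t ≤ M := by
  rcases le_or_gt t 0 with h | h
  · rw [cesaro_nonpos h]; exact hM0
  · have hI : ∫ u in Set.Ioo 0 t, |f u| ≤ M * t := by
      have h1 : ∫ u in Set.Ioo 0 t, |f u| ≤ ∫ _u in Set.Ioo 0 t, M :=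
        setIntegral_mono (integrableOnAbs hf hM t)
          (integrableOn_const measure_Ioo_lt_top.ne) hM
      rwa [setIntegral_const, Real.volume_real_Ioo, sub_zero,
        max_eq_left h.le, smul_eq_mul, mul_comm] at h1
    unfold cesaro
    rw [one_div]
    calc t⁻¹ * ∫ u in Set.Ioo 0 t, |f u| ≤ t⁻¹ * (M * t) :=
          mul_le_mul_of_nonneg_left hI (inv_nonneg.mpr h.le)
      _ = M := by field_simp
  
lemma cesaro_mono {f g : ℝ → ℝ} (hf : Measurable f) (hg : Measurable g) {M : ℝ}
    (hM : ∀ u, |g u| ≤ M) (hfg : ∀ u, |f u| ≤ |g u|) (t : ℝ) : cesaro f t ≤ cesaro g t := by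
  rcases le_or_gt t 0 with h | h
  · rw [cesaro_nonpos h, cesaro_nonpos h]
  · unfold cesaro
    refine mul_le_mul_of_nonneg_left ?_ (by positivity)
    exact setIntegral_mono (integrableOnAbs hf (fun u => (hfg u).trans (hM u)) t)
      (integrableOnAbs hg hM t) hfg

lemma cesaro_measurable {f : ℝ → ℝ} (hf : Measurable f) {M : ℝ} (hM : ∀ u, |f u| ≤ M) :
    Measurable (cesaro f) := by
  have hFmono : Monotone (fun t => ∫ u in Set.Ioo 0 t, |f u|) := by
    intro s t hst
    refine setIntegral_mono_set (integrableOnAbs hf hM t) ?_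
      ((Set.Ioo_subset_Ioo_right hst).eventuallyLE)
    filter_upwards with u using abs_nonneg _
  exact (measurable_const.div measurable_id).mul hFmono.measurable

lemma cesaro_const_mul (c : ℝ) (f : ℝ → ℝ) :
    cesaro (fun u => c * f u) = fun t => |c| * cesaro f t := by
  funext t
  unfold cesaro
  simp_rw [abs_mul]
  rw [MeasureTheory.integral_const_mul]
  ring

end cesaroLemmas

lemma chi_cesaro_lower {n k : ℕ} (hk : nu k = n) {t : ℝ}
    (h1 : (k.factorial : ℝ) < t) (h2 : t ≤ ((k+1).factorial : ℝ)) :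
    1 - (k.factorial : ℝ) / t ≤ cesaro (chi n) t := by
  have hK0 : (0:ℝ) < (k.factorial : ℝ) := by exact_mod_cast k.factorial_pos
  set K : ℝ := (k.factorial : ℝ) with hKdef
  have ht0 : 0 < t := hK0.trans h1
  have hind : ∫ u in Set.Ioo 0 t, Set.indicator (Set.Ioo K t) (fun _ => (1:ℝ)) u = t - K := by
    rw [MeasureTheory.integral_indicator_const _ measurableSet_Ioo,
      measureReal_restrict_apply measurableSet_Ioo,
      Set.inter_eq_self_of_subset_left (Set.Ioo_subset_Ioo hK0.le le_rfl),
      Real.volume_real_Ioo, max_eq_left (by linarith), smul_eq_mul, mul_one]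
  have hsub : ∫ u in Set.Ioo 0 t, Set.indicator (Set.Ioo K t) (fun _ => (1:ℝ)) u
      ≤ ∫ u in Set.Ioo 0 t, |chi n u| := by
    refine setIntegral_mono ?_ (integrableOnAbs (measurable_chi n) (chi_abs_le_one n) t) ?_
    · refine Integrable.mono' (g := fun _ => (1:ℝ))
        (integrableOn_const measure_Ioo_lt_top.ne)
        ((measurable_const.indicator measurableSet_Ioo).aestronglyMeasurable) ?_
      filter_upwards with u
      rw [Real.norm_eq_abs]
      by_cases hu : u ∈ Set.Ioo K t
      · rw [Set.indicator_of_mem hu]; norm_num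
      · rw [Set.indicator_of_notMem hu]; norm_num
    · intro u
      show Set.indicator (Set.Ioo K t) (fun _ => (1:ℝ)) u ≤ |chi n u|
      by_cases hu : u ∈ Set.Ioo K t
      · rw [Set.indicator_of_mem hu, chi_eq_one hk hu.1 (hu.2.le.trans h2)]
        norm_num
      · rw [Set.indicator_of_notMem hu]; exact abs_nonneg _
  have hle : t - K ≤ ∫ u in Set.Ioo 0 t, |chi n u| := hind ▸ hsub
  unfold cesaro
  rw [one_div]
  calc 1 - K / t = t⁻¹ * (t - K) := by field_simp
    _ ≤ t⁻¹ * ∫ u in Set.Ioo 0 t, |chi n u| :=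
        mul_le_mul_of_nonneg_left hle (inv_nonneg.mpr ht0.le)

lemma chi_dist_infinite (n : ℕ) {lam : ℝ} (h0 : 0 < lam) (h1 : lam < 1) :
    volume.restrict (Set.Ioi 0) {t : ℝ | lam < |cesaro (chi n) t|} = ⊤ := by
  apply ENNReal.eq_top_of_forall_nnreal_le
  intro M
  have hlam : 0 < 1 - lam := by linarith
  have hr1 : 1 ≤ (1 - lam)⁻¹ := one_le_inv_iff₀.mpr ⟨hlam, by linarith⟩
  set r : ℝ := (1 - lam)⁻¹ with hrdef
  obtain ⟨m, hm⟩ : ∃ m : ℕ, (M : ℝ) + r ≤ m := exists_nat_ge _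
  have hMr : (M : ℝ) + r ≤ (Nat.pair n m : ℝ) :=
    hm.trans (by exact_mod_cast Nat.right_le_pair n m)
  have hnuk : nu (Nat.pair n m) = n := by simp [nu, Nat.unpair_pair]
  have hK1 : (1:ℝ) ≤ ((Nat.pair n m).factorial : ℝ) := by
    exact_mod_cast (Nat.pair n m).factorial_pos
  have hF : (((Nat.pair n m)+1).factorial : ℝ)
      = ((Nat.pair n m : ℝ) + 1) * ((Nat.pair n m).factorial : ℝ) := by
    rw [Nat.factorial_succ]; push_cast; ring
  have hM0 : (0:ℝ) ≤ (M:ℝ) := M.coe_nonneg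
  set kr : ℝ := (Nat.pair n m : ℝ) with hkrdef
  set K : ℝ := ((Nat.pair n m).factorial : ℝ) with hKdef
  set F : ℝ := (((Nat.pair n m)+1).factorial : ℝ) with hFdef
  have hrK0 : 0 < r * K := by positivity
  have hsub : Set.Ioo (r * K) F ⊆ {t : ℝ | lam < |cesaro (chi n) t|} := by
    intro t ht
    obtain ⟨htl, htr⟩ := ht
    have hKt : K < t := by nlinarith
    have ht0 : 0 < t := by linarith
    have hlow : 1 - K / t ≤ cesaro (chi n) t := chi_cesaro_lower hnuk hKt htr.le
    have hKtlam : K / t < 1 - lam := by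
      rw [div_lt_iff₀ ht0]
      have hrK : K = (1 - lam) * (r * K) := by
        rw [hrdef]; field_simp
      nlinarith
    have hfin : lam < cesaro (chi n) t := by linarith
    simpa [Set.mem_setOf_eq, abs_of_nonneg (cesaro_nonneg (chi n) t)] using hfin
  have hss : Set.Ioo (r * K) F ⊆ Set.Ioi (0:ℝ) := by
    intro u hu
    exact Set.mem_Ioi.mpr (hrK0.trans hu.1)
  have hmeas : volume.restrict (Set.Ioi (0:ℝ)) (Set.Ioo (r * K) F)
      = ENNReal.ofReal (F - r * K) := by
    rw [Measure.restrict_apply measurableSet_Ioo, Set.inter_eq_self_of_subset_left hss,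
      Real.volume_Ioo]
  have hMF : (M : ℝ) ≤ F - r * K := by
    have hk1r : (0:ℝ) ≤ kr + 1 - r := by nlinarith
    have h2 : (kr + 1 - r) * 1 ≤ (kr + 1 - r) * K := by nlinarith
    calc (M:ℝ) ≤ kr + 1 - r := by nlinarith
      _ = (kr + 1 - r) * 1 := (mul_one _).symm
      _ ≤ (kr + 1 - r) * K := h2
      _ = F - r * K := by rw [hF]; ring
  calc (M : ENNReal) = ENNReal.ofReal (M : ℝ) := by
        simp [ENNReal.ofReal_coe_nnreal]
    _ ≤ ENNReal.ofReal (F - r * K) := ENNReal.ofReal_le_ofReal hMF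
    _ = volume.restrict (Set.Ioi (0:ℝ)) (Set.Ioo (r * K) F) := hmeas.symm
    _ ≤ _ := measure_mono hsub

end CesaroProof

open CesaroProof in

/-- Let `X` be a rearrangement invariant function space on `(0,∞)` with the Fatou
property such that `L∞ ↪ X`, the Cesàro operator `C` is bounded on `X`, and
`f·χ_A ∈ X_a` whenever `f ∈ X` and `A` has finite measure. Then the Cesàro space
`CX = { f : C(|f|) ∈ X }` with norm `‖f‖_{CX} = ‖C(|f|)‖_X` contains a lattice isometric
copy of `ℓ∞`. -/
theorem cesaro_space_contains_linf
    (X : BanachIdealSpace ℝ (volume.restrict (Set.Ioi (0 : ℝ))))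
    (hsymm : X.Symmetric) (hFatou : X.Fatou)
    (hLinf : X.Mem (fun _ => 1))
    (hCbdd : ∃ K : ℝ, ∀ f, X.Mem f → X.Mem (cesaro f) ∧ X.N (cesaro f) ≤ K * X.N f)
    (hD : ∀ f, X.Mem f → ∀ A : Set ℝ, MeasurableSet A →
      (volume.restrict (Set.Ioi (0 : ℝ))) A < ⊤ → Set.indicator A f ∈ X.oc) :
    HasLatticeCopyLinf
      (fun f => AEMeasurable f (volume.restrict (Set.Ioi (0 : ℝ))) ∧ X.Mem (cesaro f))
      (fun f => X.N (cesaro f)) := by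
  classical
  set N1 := X.N (fun _ => 1) with hN1def
  have hμuniv : (volume.restrict (Set.Ioi (0:ℝ))) Set.univ = ⊤ := by
    rw [Measure.restrict_apply MeasurableSet.univ, Set.univ_inter, Real.volume_Ioi]
  have hN1pos : 0 < N1 := by
    rcases lt_or_eq_of_le (X.N_nonneg (fun _ => 1)) with h | h
    · exact h
    · exfalso
      have hz := X.N_eq_zero _ hLinf h.symm
      rw [ae_iff] at hz
      have hset : {a : ℝ | ¬ (fun _ => (1:ℝ)) a = 0} = Set.univ := by
        ext a; simp
      rw [hset, hμuniv] at hz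
      exact ENNReal.top_ne_zero hz
  have hN1inv : (0:ℝ) ≤ N1⁻¹ := inv_nonneg.mpr hN1pos.le
  -- the key symmetry fact for each `chi n`
  have hchiMem : ∀ n, X.Mem (cesaro (chi n)) ∧ X.N (cesaro (chi n)) = N1 := by
    intro n
    refine hsymm _ _
      ((cesaro_measurable (measurable_chi n) (chi_abs_le_one n)).aemeasurable) ?_ hLinf
    intro lam hlam
    rcases lt_or_ge lam 1 with h1 | h1
    · have honeset : {x : ℝ | lam < |(fun _ => (1:ℝ)) x|} = Set.univ := by
        ext t; simp only [Set.mem_setOf_eq, Set.mem_univ, iff_true, abs_one]; linarith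
      rw [honeset, hμuniv, chi_dist_infinite n hlam h1]
    · have hs1 : {x : ℝ | lam < |cesaro (chi n) x|} = ∅ := by
        ext t
        simp only [Set.mem_setOf_eq, Set.mem_empty_iff_false, iff_false, not_lt]
        calc |cesaro (chi n) t| = cesaro (chi n) t := abs_of_nonneg (cesaro_nonneg _ _)
          _ ≤ 1 := cesaro_le (measurable_chi n) zero_le_one (chi_abs_le_one n) t
          _ ≤ lam := h1
      have hs2 : {x : ℝ | lam < |(fun _ => (1:ℝ)) x|} = ∅ := by
        ext t
        simp only [Set.mem_setOf_eq, Set.mem_empty_iff_false, iff_false, not_lt, abs_one]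
        linarith
      rw [hs1, hs2]
  refine ⟨fun x t => N1⁻¹ * rawT x t, ?_, ?_, ?_, ?_⟩
  · intro x y
    funext t
    simp only [rawT_add, Pi.add_apply]
    ring
  · intro c x
    funext t
    simp only [rawT_smul, Pi.smul_apply, smul_eq_mul]
    ring
  · intro x
    funext t
    simp only [rawT_abs, abs_mul, abs_of_nonneg hN1inv]
  · intro x hbdd
    set s : ℝ := ⨆ n, |x n| with hsdef
    have hs0 : 0 ≤ s := le_trans (abs_nonneg (x 0)) (le_ciSup hbdd 0)
    have hraws : ∀ u, |rawT x u| ≤ s := by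
      intro u
      by_cases h : 1 < u
      · simp only [rawT, if_pos h]; exact le_ciSup hbdd _
      · simp only [rawT, if_neg h, abs_zero]; exact hs0
    have hmeasraw : Measurable (rawT x) := measurable_rawT x
    have hcesmeas : Measurable (cesaro (rawT x)) := cesaro_measurable hmeasraw hraws
    -- upper bound via the ideal property
    have hae1 : ∀ᵐ t ∂(volume.restrict (Set.Ioi (0:ℝ))),
        |cesaro (rawT x) t| ≤ |(s • fun _ => (1:ℝ)) t| := by
      filter_upwards with t
      have h1 : |cesaro (rawT x) t| = cesaro (rawT x) t := abs_of_nonneg (cesaro_nonneg _ _)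
      have h2 : cesaro (rawT x) t ≤ s := cesaro_le hmeasraw hs0 hraws t
      have h3 : |(s • fun _ => (1:ℝ)) t| = s := by
        simp [abs_of_nonneg hs0]
      rw [h1, h3]; exact h2
    have hub := X.ideal (cesaro (rawT x)) (s • fun _ => (1:ℝ)) hcesmeas.aemeasurable hae1
      (X.mem_smul s _ hLinf)
    have hubN : X.N (cesaro (rawT x)) ≤ s * N1 := by
      calc X.N (cesaro (rawT x)) ≤ X.N (s • fun _ => (1:ℝ)) := hub.2
        _ = |s| * N1 := X.N_smul s _
        _ = s * N1 := by rw [abs_of_nonneg hs0]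
    -- lower bound via the ideal property and the symmetry fact
    have hlb : ∀ n, |x n| * N1 ≤ X.N (cesaro (rawT x)) := by
      intro n
      have hptwise : ∀ u, |x n * chi n u| ≤ |rawT x u| := by
        intro u
        simp only [chi, rawT]
        split_ifs with h h2
        · rw [mul_one, h2]
        · rw [mul_zero, abs_zero]; exact abs_nonneg _
        · rw [mul_zero, abs_zero]
      have hcomp : ∀ t, |x n| * cesaro (chi n) t ≤ cesaro (rawT x) t := by
        intro t
        have hm := cesaro_mono (f := fun u => x n * chi n u) (g := rawT x)
          (measurable_const.mul (measurable_chi n)) hmeasraw hraws hptwise t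
        have heq := congrFun (cesaro_const_mul (x n) (chi n)) t
        rw [heq] at hm
        exact hm
      have hae2 : ∀ᵐ t ∂(volume.restrict (Set.Ioi (0:ℝ))),
          |(|x n| • cesaro (chi n)) t| ≤ |cesaro (rawT x) t| := by
        filter_upwards with t
        rw [Pi.smul_apply, smul_eq_mul, abs_mul, abs_abs,
          abs_of_nonneg (cesaro_nonneg (chi n) t), abs_of_nonneg (cesaro_nonneg (rawT x) t)]
        exact hcomp t
      have hcm : AEMeasurable (|x n| • cesaro (chi n)) (volume.restrict (Set.Ioi (0:ℝ))) := by
        have hmm : Measurable fun t => |x n| * cesaro (chi n) t :=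
          measurable_const.mul (cesaro_measurable (measurable_chi n) (chi_abs_le_one n))
        exact hmm.aemeasurable
      have hid := X.ideal (|x n| • cesaro (chi n)) (cesaro (rawT x)) hcm hae2 hub.1
      have h2 := hid.2
      rwa [X.N_smul, abs_abs, (hchiMem n).2] at h2
    have hNraw : X.N (cesaro (rawT x)) = s * N1 := by
      refine le_antisymm hubN ?_
      have hsle : s ≤ X.N (cesaro (rawT x)) / N1 := by
        refine ciSup_le fun n => ?_
        rw [le_div_iff₀ hN1pos]
        exact hlb n
      calc s * N1 ≤ (X.N (cesaro (rawT x)) / N1) * N1 :=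
            mul_le_mul_of_nonneg_right hsle hN1pos.le
        _ = X.N (cesaro (rawT x)) := by field_simp
    have hces : cesaro (fun t => N1⁻¹ * rawT x t) = N1⁻¹ • cesaro (rawT x) := by
      rw [cesaro_const_mul]
      funext t
      rw [Pi.smul_apply, smul_eq_mul, abs_of_nonneg hN1inv]
    refine ⟨⟨(measurable_const.mul hmeasraw).aemeasurable, ?_⟩, ?_⟩
    · show X.Mem (cesaro (fun t => N1⁻¹ * rawT x t))
      rw [hces]
      exact X.mem_smul _ _ hub.1
    · show X.N (cesaro (fun t => N1⁻¹ * rawT x t)) = s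
      rw [hces, X.N_smul, hNraw, abs_of_nonneg hN1inv]
      field_simp
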